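/- If y* is a minimizer of the dual function g(y) = (1/2)‖Proj_{ℝ₊^{n×m}}(A*y + Z)‖_F² - ⟨r, y⟩, then Π* := Proj_{ℝ₊^{n×m}}(A*y* + Z) is the unique minimizer of (1/2)‖Π - Z‖_F² over the transport polytope U(a,b), i.e., the Euclidean projection of Z onto U(a,b). -/

import Mathlib

open Finset

lemma max_sq_add_le (u t : ℝ) : max (u + t) 0 ^ 2 ≤ max u 0 ^ 2 + 2 * max u 0 * t + t ^ 2 := by
  rcases le_total (u + t) 0 with h2 | h2 <;> rcases le_total u 0 with h | h <;>
    simp [max_eq_right, max_eq_left, *] <;> nlinarith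

lemma zero_of_quad (M c : ℝ) (hM : 0 ≤ M) (h : ∀ t : ℝ, 0 ≤ t * c + M * t ^ 2) : c = 0 := by
  by_contra hc
  have h1 := h (-c / (2 * M + 1))
  have h2 : (0:ℝ) < 2 * M + 1 := by linarith
  have h3 : 0 < c ^ 2 := by positivity
  rw [div_mul_eq_mul_div] at h1
  have h4 : (0:ℝ) < (2*M+1)^2 := by positivity
  field_simp at h1
  nlinarith [mul_pos h3 h2]

/-- Dual objective of the Euclidean projection onto the transport polytope. -/
noncomputable def dualG (n m : ℕ) (Z : Matrix (Fin n) (Fin m) ℝ)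
    (a : Fin n → ℝ) (b : Fin m → ℝ)
    (y : EuclideanSpace ℝ (Fin n ⊕ Fin m)) : ℝ :=
  (1 / 2) * ∑ i, ∑ j, (max (y (Sum.inl i) + y (Sum.inr j) + Z i j) 0) ^ 2
    - ((∑ i, a i * y (Sum.inl i)) + (∑ j, b j * y (Sum.inr j)))

theorem stmt7 (n m : ℕ) (a : Fin n → ℝ) (b : Fin m → ℝ)
    (ha : ∀ i, 0 ≤ a i) (hb : ∀ j, 0 ≤ b j) (hab : ∑ i, a i = ∑ j, b j)
    (Z : Matrix (Fin n) (Fin m) ℝ)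
    (ystar : EuclideanSpace ℝ (Fin n ⊕ Fin m))
    (hmin : ∀ y, dualG n m Z a b ystar ≤ dualG n m Z a b y)
    (Pstar : Matrix (Fin n) (Fin m) ℝ)
    (hPstar : ∀ i j, Pstar i j = max (ystar (Sum.inl i) + ystar (Sum.inr j) + Z i j) 0) :
    (∀ i j, 0 ≤ Pstar i j) ∧ (∀ i, ∑ j, Pstar i j = a i) ∧ (∀ j, ∑ i, Pstar i j = b j) ∧
    ∀ P : Matrix (Fin n) (Fin m) ℝ,
      (∀ i j, 0 ≤ P i j) → (∀ i, ∑ j, P i j = a i) → (∀ j, ∑ i, P i j = b j) →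
      ((1 : ℝ) / 2) * ∑ i, ∑ j, (Pstar i j - Z i j) ^ 2
          ≤ (1 / 2) * ∑ i, ∑ j, (P i j - Z i j) ^ 2 ∧
      (P ≠ Pstar →
        ((1 : ℝ) / 2) * ∑ i, ∑ j, (Pstar i j - Z i j) ^ 2
          < (1 / 2) * ∑ i, ∑ j, (P i j - Z i j) ^ 2) := by
  have hpos : ∀ i j, 0 ≤ Pstar i j := by
    intro i j; rw [hPstar]; exact le_max_right _ _
  -- row marginals
  have hrow : ∀ i, ∑ j, Pstar i j = a i := by
    intro i
    have key : ∀ t : ℝ, 0 ≤ t * ((∑ j, Pstar i j) - a i) + ((m:ℝ)/2) * t ^ 2 := by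
      intro t
      set y' : EuclideanSpace ℝ (Fin n ⊕ Fin m) :=
        WithLp.toLp 2 (fun k => ystar k + if k = Sum.inl i then t else 0) with hy'
      have hy1 : ∀ i', y' (Sum.inl i') = ystar (Sum.inl i') + if i' = i then t else 0 := by
        intro i'; simp [hy']
      have hy2 : ∀ j, y' (Sum.inr j) = ystar (Sum.inr j) := by
        intro j; simp [hy']
      have hle := hmin y'
      have hquad : ∑ i', ∑ j, max (y' (Sum.inl i') + y' (Sum.inr j) + Z i' j) 0 ^ 2
          ≤ (∑ i', ∑ j, max (ystar (Sum.inl i') + ystar (Sum.inr j) + Z i' j) 0 ^ 2)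
            + (2 * (∑ j, Pstar i j) * t + (m:ℝ) * t ^ 2) := by
        have h1 : ∀ i' ∈ (univ : Finset (Fin n)),
            ∑ j, max (y' (Sum.inl i') + y' (Sum.inr j) + Z i' j) 0 ^ 2
            ≤ (∑ j, max (ystar (Sum.inl i') + ystar (Sum.inr j) + Z i' j) 0 ^ 2)
              + (if i' = i then 2 * (∑ j, Pstar i j) * t + (m:ℝ) * t ^ 2 else 0) := by
          intro i' _
          by_cases hii : i' = i
          · subst hii
            rw [if_pos rfl]
            have h2 : ∀ j ∈ (univ : Finset (Fin m)),
                max (y' (Sum.inl i') + y' (Sum.inr j) + Z i' j) 0 ^ 2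
                ≤ max (ystar (Sum.inl i') + ystar (Sum.inr j) + Z i' j) 0 ^ 2
                  + (2 * Pstar i' j * t + t ^ 2) := by
              intro j _
              rw [hy1, hy2, if_pos rfl, hPstar]
              have h3 := max_sq_add_le (ystar (Sum.inl i') + ystar (Sum.inr j) + Z i' j) t
              have h4 : ystar (Sum.inl i') + t + ystar (Sum.inr j) + Z i' j
                  = ystar (Sum.inl i') + ystar (Sum.inr j) + Z i' j + t := by ring
              rw [h4]
              nlinarith [h3]
            calc ∑ j, max (y' (Sum.inl i') + y' (Sum.inr j) + Z i' j) 0 ^ 2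
                ≤ ∑ j, (max (ystar (Sum.inl i') + ystar (Sum.inr j) + Z i' j) 0 ^ 2
                  + (2 * Pstar i' j * t + t ^ 2)) := Finset.sum_le_sum h2
              _ = (∑ j, max (ystar (Sum.inl i') + ystar (Sum.inr j) + Z i' j) 0 ^ 2)
                  + (2 * (∑ j, Pstar i' j) * t + (m:ℝ) * t ^ 2) := by
                rw [Finset.sum_add_distrib, Finset.sum_add_distrib, Finset.sum_const,
                  card_univ, Fintype.card_fin, ← Finset.sum_mul, ← Finset.mul_sum,
                  nsmul_eq_mul]
          · rw [if_neg hii]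
            apply le_of_eq
            rw [add_zero]
            apply Finset.sum_congr rfl
            intro j _
            rw [hy1, hy2, if_neg hii, add_zero]
        calc ∑ i', ∑ j, max (y' (Sum.inl i') + y' (Sum.inr j) + Z i' j) 0 ^ 2
            ≤ ∑ i', ((∑ j, max (ystar (Sum.inl i') + ystar (Sum.inr j) + Z i' j) 0 ^ 2)
              + (if i' = i then 2 * (∑ j, Pstar i j) * t + (m:ℝ) * t ^ 2 else 0)) :=
              Finset.sum_le_sum h1
          _ = _ := by
              rw [Finset.sum_add_distrib, Finset.sum_ite_eq' univ i]
              simp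
      have hlin : ∑ i', a i' * y' (Sum.inl i')
          = (∑ i', a i' * ystar (Sum.inl i')) + a i * t := by
        simp only [hy1, mul_add]
        rw [Finset.sum_add_distrib]
        congr 1
        simp [mul_ite, mul_zero, Finset.sum_ite_eq']
      have hlin2 : ∑ j, b j * y' (Sum.inr j) = ∑ j, b j * ystar (Sum.inr j) := by
        apply Finset.sum_congr rfl; intro j _; rw [hy2]
      rw [dualG, dualG, hlin, hlin2] at hle
      nlinarith [hquad, hle]
    have := zero_of_quad ((m:ℝ)/2) _ (by positivity) key
    linarith
  -- column marginals
  have hcol : ∀ j, ∑ i, Pstar i j = b j := by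
    intro j
    have key : ∀ t : ℝ, 0 ≤ t * ((∑ i, Pstar i j) - b j) + ((n:ℝ)/2) * t ^ 2 := by
      intro t
      set y' : EuclideanSpace ℝ (Fin n ⊕ Fin m) :=
        WithLp.toLp 2 (fun k => ystar k + if k = Sum.inr j then t else 0) with hy'
      have hy1 : ∀ j', y' (Sum.inr j') = ystar (Sum.inr j') + if j' = j then t else 0 := by
        intro j'; simp [hy']
      have hy2 : ∀ i, y' (Sum.inl i) = ystar (Sum.inl i) := by
        intro i; simp [hy']
      have hle := hmin y'
      have hquad : ∑ i, ∑ j', max (y' (Sum.inl i) + y' (Sum.inr j') + Z i j') 0 ^ 2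
          ≤ (∑ i, ∑ j', max (ystar (Sum.inl i) + ystar (Sum.inr j') + Z i j') 0 ^ 2)
            + (2 * (∑ i, Pstar i j) * t + (n:ℝ) * t ^ 2) := by
        have hswap1 : ∑ i, ∑ j', max (y' (Sum.inl i) + y' (Sum.inr j') + Z i j') 0 ^ 2
            = ∑ j', ∑ i, max (y' (Sum.inl i) + y' (Sum.inr j') + Z i j') 0 ^ 2 :=
          Finset.sum_comm
        have hswap2 : ∑ i, ∑ j', max (ystar (Sum.inl i) + ystar (Sum.inr j') + Z i j') 0 ^ 2
            = ∑ j', ∑ i, max (ystar (Sum.inl i) + ystar (Sum.inr j') + Z i j') 0 ^ 2 :=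
          Finset.sum_comm
        rw [hswap1, hswap2]
        have h1 : ∀ j' ∈ (univ : Finset (Fin m)),
            ∑ i, max (y' (Sum.inl i) + y' (Sum.inr j') + Z i j') 0 ^ 2
            ≤ (∑ i, max (ystar (Sum.inl i) + ystar (Sum.inr j') + Z i j') 0 ^ 2)
              + (if j' = j then 2 * (∑ i, Pstar i j) * t + (n:ℝ) * t ^ 2 else 0) := by
          intro j' _
          by_cases hjj : j' = j
          · subst hjj
            rw [if_pos rfl]
            have h2 : ∀ i ∈ (univ : Finset (Fin n)),
                max (y' (Sum.inl i) + y' (Sum.inr j') + Z i j') 0 ^ 2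
                ≤ max (ystar (Sum.inl i) + ystar (Sum.inr j') + Z i j') 0 ^ 2
                  + (2 * Pstar i j' * t + t ^ 2) := by
              intro i _
              rw [hy1, hy2, if_pos rfl, hPstar]
              have h3 := max_sq_add_le (ystar (Sum.inl i) + ystar (Sum.inr j') + Z i j') t
              have h4 : ystar (Sum.inl i) + (ystar (Sum.inr j') + t) + Z i j'
                  = ystar (Sum.inl i) + ystar (Sum.inr j') + Z i j' + t := by ring
              rw [h4]
              nlinarith [h3]
            calc ∑ i, max (y' (Sum.inl i) + y' (Sum.inr j') + Z i j') 0 ^ 2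
                ≤ ∑ i, (max (ystar (Sum.inl i) + ystar (Sum.inr j') + Z i j') 0 ^ 2
                  + (2 * Pstar i j' * t + t ^ 2)) := Finset.sum_le_sum h2
              _ = (∑ i, max (ystar (Sum.inl i) + ystar (Sum.inr j') + Z i j') 0 ^ 2)
                  + (2 * (∑ i, Pstar i j') * t + (n:ℝ) * t ^ 2) := by
                rw [Finset.sum_add_distrib, Finset.sum_add_distrib, Finset.sum_const,
                  card_univ, Fintype.card_fin, ← Finset.sum_mul, ← Finset.mul_sum,
                  nsmul_eq_mul]
          · rw [if_neg hjj]
            apply le_of_eq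
            rw [add_zero]
            apply Finset.sum_congr rfl
            intro i _
            rw [hy1, hy2, if_neg hjj, add_zero]
        calc ∑ j', ∑ i, max (y' (Sum.inl i) + y' (Sum.inr j') + Z i j') 0 ^ 2
            ≤ ∑ j', ((∑ i, max (ystar (Sum.inl i) + ystar (Sum.inr j') + Z i j') 0 ^ 2)
              + (if j' = j then 2 * (∑ i, Pstar i j) * t + (n:ℝ) * t ^ 2 else 0)) :=
              Finset.sum_le_sum h1
          _ = _ := by
              rw [Finset.sum_add_distrib, Finset.sum_ite_eq' univ j]
              simp
      have hlin : ∑ j', b j' * y' (Sum.inr j')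
          = (∑ j', b j' * ystar (Sum.inr j')) + b j * t := by
        simp only [hy1, mul_add]
        rw [Finset.sum_add_distrib]
        congr 1
        simp [mul_ite, mul_zero, Finset.sum_ite_eq']
      have hlin2 : ∑ i, a i * y' (Sum.inl i) = ∑ i, a i * ystar (Sum.inl i) := by
        apply Finset.sum_congr rfl; intro i _; rw [hy2]
      rw [dualG, dualG, hlin, hlin2] at hle
      nlinarith [hquad, hle]
    have := zero_of_quad ((n:ℝ)/2) _ (by positivity) key
    linarith
  refine ⟨hpos, hrow, hcol, ?_⟩
  intro P hP hProw hPcol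
  -- key inner product inequality
  have hinner : 0 ≤ ∑ i, ∑ j, (Pstar i j - Z i j) * (P i j - Pstar i j) := by
    have hexp : ∀ i j, (Pstar i j - Z i j) * (P i j - Pstar i j)
        = (max (ystar (Sum.inl i) + ystar (Sum.inr j) + Z i j) 0
            - (ystar (Sum.inl i) + ystar (Sum.inr j) + Z i j)) * P i j
          + ystar (Sum.inl i) * (P i j - Pstar i j)
          + ystar (Sum.inr j) * (P i j - Pstar i j) := by
      intro i j
      rw [hPstar]
      set s := ystar (Sum.inl i) + ystar (Sum.inr j) + Z i j with hs
      have hzero : (max s 0 - s) * max s 0 = 0 := by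
        rcases le_total s 0 with h | h
        · rw [max_eq_right h]; ring
        · rw [max_eq_left h]; ring
      have : Z i j = s - ystar (Sum.inl i) - ystar (Sum.inr j) := by rw [hs]; ring
      rw [this]
      nlinarith [hzero]
    calc (0:ℝ) ≤ ∑ i, ∑ j, (max (ystar (Sum.inl i) + ystar (Sum.inr j) + Z i j) 0
            - (ystar (Sum.inl i) + ystar (Sum.inr j) + Z i j)) * P i j := by
          apply Finset.sum_nonneg; intro i _
          apply Finset.sum_nonneg; intro j _
          apply mul_nonneg _ (hP i j)
          simp [le_max_iff]
      _ = ∑ i, ∑ j, (Pstar i j - Z i j) * (P i j - Pstar i j) := by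
          have e1 : ∑ i, ∑ j, ystar (Sum.inl i) * (P i j - Pstar i j) = 0 := by
            apply Finset.sum_eq_zero; intro i _
            rw [← Finset.mul_sum, Finset.sum_sub_distrib, hProw, hrow, sub_self, mul_zero]
          have e2 : ∑ i, ∑ j, ystar (Sum.inr j) * (P i j - Pstar i j) = 0 := by
            rw [Finset.sum_comm]
            apply Finset.sum_eq_zero; intro j _
            rw [← Finset.mul_sum, Finset.sum_sub_distrib, hPcol, hcol, sub_self, mul_zero]
          have : ∑ i, ∑ j, (Pstar i j - Z i j) * (P i j - Pstar i j)
              = (∑ i, ∑ j, (max (ystar (Sum.inl i) + ystar (Sum.inr j) + Z i j) 0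
                - (ystar (Sum.inl i) + ystar (Sum.inr j) + Z i j)) * P i j)
              + (∑ i, ∑ j, ystar (Sum.inl i) * (P i j - Pstar i j))
              + (∑ i, ∑ j, ystar (Sum.inr j) * (P i j - Pstar i j)) := by
            rw [← Finset.sum_add_distrib, ← Finset.sum_add_distrib]
            apply Finset.sum_congr rfl; intro i _
            rw [← Finset.sum_add_distrib, ← Finset.sum_add_distrib]
            apply Finset.sum_congr rfl; intro j _
            exact hexp i j
          rw [this, e1, e2, add_zero, add_zero]
  have hdecomp : ∑ i, ∑ j, (P i j - Z i j) ^ 2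
      = (∑ i, ∑ j, (Pstar i j - Z i j) ^ 2)
        + 2 * (∑ i, ∑ j, (Pstar i j - Z i j) * (P i j - Pstar i j))
        + (∑ i, ∑ j, (P i j - Pstar i j) ^ 2) := by
    rw [Finset.mul_sum, ← Finset.sum_add_distrib, ← Finset.sum_add_distrib]
    apply Finset.sum_congr rfl; intro i _
    rw [Finset.mul_sum, ← Finset.sum_add_distrib, ← Finset.sum_add_distrib]
    apply Finset.sum_congr rfl; intro j _
    ring
  have hsq : 0 ≤ ∑ i, ∑ j, (P i j - Pstar i j) ^ 2 := by
    apply Finset.sum_nonneg; intro i _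
    apply Finset.sum_nonneg; intro j _
    positivity
  constructor
  · nlinarith [hinner, hsq, hdecomp]
  · intro hne
    have hposd : 0 < ∑ i, ∑ j, (P i j - Pstar i j) ^ 2 := by
      obtain ⟨i, hi⟩ := Function.ne_iff.mp hne
      obtain ⟨j, hj⟩ := Function.ne_iff.mp hi
      apply Finset.sum_pos' (fun i _ => Finset.sum_nonneg fun j _ => by positivity)
      refine ⟨i, Finset.mem_univ i, ?_⟩
      apply Finset.sum_pos' (fun j _ => by positivity)
      exact ⟨j, Finset.mem_univ j, by
        have h := sub_ne_zero_of_ne hj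
        positivity⟩
    nlinarith [hinner, hposd, hdecomp]
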